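/- Let ρ_1, ρ_2 be positive definite Hermitian matrices on a finite-dimensional complex inner product space. Then the function t ↦ log Tr[ρ_1^t ρ_2^{1−t}] is convex on [0,1]. -/

import Mathlib

open Matrix
open scoped ComplexOrder

noncomputable section

variable {n : Type*} [Fintype n] [DecidableEq n]

/-- Real power of a positive matrix via the continuous functional calculus. -/
def mpow (A : Matrix n n ℂ) (t : ℝ) : Matrix n n ℂ := cfc (fun x : ℝ => x ^ t) A

section Aux

lemma psi_term_eq {c x y θ θ' s t : ℝ} (hc : 0 ≤ c) (hx : 0 < x) (hy : 0 < y)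
    (hθ : 0 < θ) (hθ' : 0 < θ') (hsum : θ + θ' = 1) :
    c * x ^ (θ * s + θ' * t) * y ^ (1 - (θ * s + θ' * t))
      = (c * x ^ s * y ^ (1 - s)) ^ θ * (c * x ^ t * y ^ (1 - t)) ^ θ' := by
  have hc1 : c = c ^ θ * c ^ θ' := by
    rw [← Real.rpow_add' hc (by rw [hsum]; norm_num), hsum, Real.rpow_one]
  have hy1 : 1 - (θ * s + θ' * t) = θ * (1 - s) + θ' * (1 - t) := by
    linear_combination -hsum
  rw [hy1, Real.rpow_add hx, Real.rpow_add hy,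
    Real.mul_rpow (mul_nonneg hc (Real.rpow_nonneg hx.le _)) (Real.rpow_nonneg hy.le _),
    Real.mul_rpow hc (Real.rpow_nonneg hx.le _),
    Real.mul_rpow (mul_nonneg hc (Real.rpow_nonneg hx.le _)) (Real.rpow_nonneg hy.le _),
    Real.mul_rpow hc (Real.rpow_nonneg hx.le _),
    ← Real.rpow_mul hx.le, ← Real.rpow_mul hx.le,
    ← Real.rpow_mul hy.le, ← Real.rpow_mul hy.le,
    mul_comm s θ, mul_comm t θ', mul_comm (1 - s) θ, mul_comm (1 - t) θ']
  nth_rewrite 1 [hc1]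
  ring

lemma psi_logSum_convex {ι : Type*} [Fintype ι] (c x y : ι → ℝ)
    (hc : ∀ i, 0 ≤ c i) (hx : ∀ i, 0 < x i) (hy : ∀ i, 0 < y i)
    (hex : ∃ i, 0 < c i) :
    ConvexOn ℝ Set.univ (fun t : ℝ => Real.log (∑ i, c i * x i ^ t * y i ^ (1 - t))) := by
  set F : ℝ → ℝ := fun t => ∑ i, c i * x i ^ t * y i ^ (1 - t) with hF
  have hterm : ∀ (t : ℝ) (i : ι), 0 ≤ c i * x i ^ t * y i ^ (1 - t) := fun t i =>
    mul_nonneg (mul_nonneg (hc i) (Real.rpow_nonneg (hx i).le _)) (Real.rpow_nonneg (hy i).le _)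
  have hFpos : ∀ t, 0 < F t := by
    intro t
    obtain ⟨i₀, hi₀⟩ := hex
    refine Finset.sum_pos' (fun i _ => hterm t i) ⟨i₀, Finset.mem_univ _, ?_⟩
    exact mul_pos (mul_pos hi₀ (Real.rpow_pos_of_pos (hx i₀) _)) (Real.rpow_pos_of_pos (hy i₀) _)
  refine ⟨convex_univ, ?_⟩
  intro s _ t _ θ θ' hθ hθ' hsum
  rcases eq_or_lt_of_le hθ with rfl | hθpos
  · simp_all
  rcases eq_or_lt_of_le hθ' with rfl | hθ'pos
  · simp_all
  have hθlt : θ < 1 := by linarith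
  simp only [smul_eq_mul]
  have key : F (θ * s + θ' * t) ≤ (F s) ^ θ * (F t) ^ θ' := by
    have holder := Real.inner_le_Lp_mul_Lq_of_nonneg (s := Finset.univ)
      (f := fun i => (c i * x i ^ s * y i ^ (1 - s)) ^ θ)
      (g := fun i => (c i * x i ^ t * y i ^ (1 - t)) ^ θ')
      (p := θ⁻¹) (q := θ'⁻¹)
      ⟨by rw [inv_inv, inv_inv, inv_one]; exact hsum, inv_pos.2 hθpos, inv_pos.2 hθ'pos⟩
      (fun i _ => Real.rpow_nonneg (hterm s i) _)
      (fun i _ => Real.rpow_nonneg (hterm t i) _)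
    rw [hF]
    calc (∑ i, c i * x i ^ (θ * s + θ' * t) * y i ^ (1 - (θ * s + θ' * t)))
        = ∑ i, (c i * x i ^ s * y i ^ (1 - s)) ^ θ * (c i * x i ^ t * y i ^ (1 - t)) ^ θ' :=
          Finset.sum_congr rfl fun i _ =>
            psi_term_eq (hc i) (hx i) (hy i) hθpos hθ'pos hsum
      _ ≤ (∑ i, ((c i * x i ^ s * y i ^ (1 - s)) ^ θ) ^ θ⁻¹) ^ (1 / θ⁻¹)
            * (∑ i, ((c i * x i ^ t * y i ^ (1 - t)) ^ θ') ^ θ'⁻¹) ^ (1 / θ'⁻¹) := holder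
      _ = (F s) ^ θ * (F t) ^ θ' := by
          rw [one_div, inv_inv, one_div, inv_inv]
          congr 1 <;> congr 1 <;> refine Finset.sum_congr rfl fun i _ => ?_
          · rw [← Real.rpow_mul (hterm s i), mul_inv_cancel₀ hθpos.ne', Real.rpow_one]
          · rw [← Real.rpow_mul (hterm t i), mul_inv_cancel₀ hθ'pos.ne', Real.rpow_one]
  calc Real.log (F (θ * s + θ' * t)) ≤ Real.log ((F s) ^ θ * (F t) ^ θ') :=
        Real.log_le_log (hFpos _) key
    _ = θ * Real.log (F s) + θ' * Real.log (F t) := by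
        rw [Real.log_mul (Real.rpow_pos_of_pos (hFpos s) _).ne'
            (Real.rpow_pos_of_pos (hFpos t) _).ne',
          Real.log_rpow (hFpos s), Real.log_rpow (hFpos t)]

lemma psi_trace_re (U V : Matrix n n ℂ) (d e : n → ℝ) :
    ((U * diagonal (fun i => (d i : ℂ)) * star U) *
      (V * diagonal (fun i => (e i : ℂ)) * star V)).trace.re
      = ∑ p : n × n, ‖(star U * V) p.1 p.2‖ ^ 2 * d p.1 * e p.2 := by
  set D := diagonal (fun i => (d i : ℂ)) with hD
  set E := diagonal (fun i => (e i : ℂ)) with hE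
  set W := star U * V with hW
  have h1 : (U * D * star U) * (V * E * star V) = U * (D * star U * V * E * star V) := by
    noncomm_ring
  have h2 : (D * star U * V * E * star V) * U = D * W * E * star W := by
    rw [hW, StarMul.star_mul, star_star]
    noncomm_ring
  rw [h1, Matrix.trace_mul_comm, h2]
  have h3 : (D * W * E * star W).trace = ∑ p : n × n, (d p.1 : ℂ) * W p.1 p.2 * (e p.2 : ℂ)
      * (starRingEnd ℂ) (W p.1 p.2) := by
    have hentry : ∀ i j, (D * W * E) i j = (d i : ℂ) * W i j * (e j : ℂ) := fun i j => by
      rw [hD, hE, Matrix.mul_diagonal, Matrix.diagonal_mul]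
    have hdiag : ∀ i : n, (D * W * E * star W) i i
        = ∑ j, (d i : ℂ) * W i j * (e j : ℂ) * (starRingEnd ℂ) (W i j) := by
      intro i
      rw [Matrix.mul_apply]
      refine Finset.sum_congr rfl fun j _ => ?_
      rw [hentry, Matrix.star_apply, RCLike.star_def]
    simp only [Matrix.trace, Matrix.diag, hdiag]
    rw [← Finset.sum_product', Finset.univ_product_univ]
  rw [h3, Complex.re_sum]
  refine Finset.sum_congr rfl fun p _ => ?_
  rw [show (d p.1 : ℂ) * W p.1 p.2 * (e p.2 : ℂ) * (starRingEnd ℂ) (W p.1 p.2)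
      = (d p.1 : ℂ) * (e p.2 : ℂ) * (W p.1 p.2 * (starRingEnd ℂ) (W p.1 p.2)) by ring,
    Complex.mul_conj]
  rw [Complex.normSq_eq_norm_sq]
  simp only [← Complex.ofReal_pow, ← Complex.ofReal_mul, Complex.ofReal_re]
  ring

end Aux

/-- **Convexity of `t ↦ log Tr[ρ₁^t ρ₂^{1−t}]`.**  For positive definite Hermitian matrices
`ρ₁, ρ₂`, the function `t ↦ log Tr[ρ₁^t ρ₂^{1−t}]` is convex on `[0,1]`. -/
theorem psi_convexOn (ρ₁ ρ₂ : Matrix n n ℂ) (hρ₁ : ρ₁.PosDef) (hρ₂ : ρ₂.PosDef) :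
    ConvexOn ℝ (Set.Icc (0 : ℝ) 1)
      (fun t => Real.log ((mpow ρ₁ t * mpow ρ₂ (1 - t)).trace.re)) := by
  rcases isEmpty_or_nonempty n with hn | hn
  · have : ∀ t : ℝ, (mpow ρ₁ t * mpow ρ₂ (1 - t)).trace = 0 := fun t => by
      simp [Matrix.trace]
    simp only [this, Complex.zero_re, Real.log_zero]
    exact convexOn_const 0 (convex_Icc 0 1)
  set U := (Matrix.IsHermitian.eigenvectorUnitary hρ₁.1 : Matrix n n ℂ) with hU
  set V := (Matrix.IsHermitian.eigenvectorUnitary hρ₂.1 : Matrix n n ℂ) with hV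
  set W := star U * V with hW
  set a : n → ℝ := hρ₁.1.eigenvalues with ha
  set b : n → ℝ := hρ₂.1.eigenvalues with hb
  have hmpow₁ : ∀ t : ℝ, mpow ρ₁ t = U * diagonal (fun i => ((a i ^ t : ℝ) : ℂ)) * star U := by
    intro t
    rw [mpow, Matrix.IsHermitian.cfc_eq hρ₁.1, Matrix.IsHermitian.cfc]
    rfl
  have hmpow₂ : ∀ t : ℝ, mpow ρ₂ t = V * diagonal (fun i => ((b i ^ t : ℝ) : ℂ)) * star V := by
    intro t
    rw [mpow, Matrix.IsHermitian.cfc_eq hρ₂.1, Matrix.IsHermitian.cfc]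
    rfl
  have key : ∀ t : ℝ, (mpow ρ₁ t * mpow ρ₂ (1 - t)).trace.re
      = ∑ p : n × n, ‖W p.1 p.2‖ ^ 2 * a p.1 ^ t * b p.2 ^ (1 - t) := by
    intro t
    rw [hmpow₁ t, hmpow₂ (1 - t), psi_trace_re]
  have hex : ∃ p : n × n, 0 < ‖W p.1 p.2‖ ^ 2 := by
    by_contra hcon
    push_neg at hcon
    have hW0 : W = 0 := by
      ext i j
      have h1 : ‖W i j‖ ^ 2 ≤ 0 := hcon (i, j)
      have h2 : ‖W i j‖ = 0 := by nlinarith [norm_nonneg (W i j)]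
      simpa using norm_eq_zero.mp h2
    have hUU : U * star U = 1 :=
      (Matrix.mem_unitaryGroup_iff).mp (Matrix.IsHermitian.eigenvectorUnitary hρ₁.1).2
    have hVV : star V * V = 1 :=
      (Matrix.mem_unitaryGroup_iff').mp (Matrix.IsHermitian.eigenvectorUnitary hρ₂.1).2
    have hWV : star W * W = 1 := by
      calc star W * W = star V * (U * star U * V) := by
            rw [hW, StarMul.star_mul, star_star]; noncomm_ring
        _ = 1 := by rw [hUU, one_mul, hVV]
    rw [hW0, mul_zero] at hWV
    obtain ⟨i⟩ := hn
    have := congrFun (congrFun hWV i) i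
    simp at this
  have := (psi_logSum_convex (fun p : n × n => ‖W p.1 p.2‖ ^ 2)
      (fun p => a p.1) (fun p => b p.2)
      (fun p => by positivity)
      (fun p => hρ₁.eigenvalues_pos p.1)
      (fun p => hρ₂.eigenvalues_pos p.2) hex).subset
      (Set.subset_univ _) (convex_Icc 0 1)
  have hfun : (fun t : ℝ => Real.log ((mpow ρ₁ t * mpow ρ₂ (1 - t)).trace.re))
      = fun t : ℝ => Real.log (∑ p : n × n, ‖W p.1 p.2‖ ^ 2 * a p.1 ^ t * b p.2 ^ (1 - t)) :=
    funext fun t => by rw [key t]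
  rw [hfun]
  exact this

end
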